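/- Let d ≥ 1 be an integer, R > 0, and let K : [0,∞) → ℝ be a bounded, nonnegative, measurable function supported in [0,R]. For j ≥ 1 set m_{K,j} := ∫₀^R s^{j−1} K(s) ds and assume m_{K,d} > 0; define the kernel moment ratios B_p := m_{K,d+p}/m_{K,d}. Let F : [0,∞) → ℝ be continuous with F(t) = τ₁ t + τ₂ t² + τ₃ t³ + o(t³) as t → 0⁺ for real constants τ₁, τ₂, τ₃, and define the kernel average I_F(h) := (∫₀^R u^{d−1} K(u) F(hu) du)/m_{K,d}. Then, as h → 0⁺, I_F(h) − F(B₁ h) = τ₂ (B₂ − B₁²) h² + τ₃ (B₃ − B₁³) h³ + o(h³). -/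

import Mathlib

open MeasureTheory Filter Topology Asymptotics

lemma aux_II {R : ℝ} (hR : 0 ≤ R) {f : ℝ → ℝ}
    (hf : AEMeasurable f (volume.restrict (Set.Ioc 0 R)))
    {C : ℝ} (hb : ∀ u ∈ Set.Ioc (0:ℝ) R, |f u| ≤ C) :
    IntervalIntegrable f volume 0 R := by
  rw [intervalIntegrable_iff_integrableOn_Ioc_of_le hR]
  refine Integrable.mono' (g := fun _ => C)
    (integrableOn_const measure_Ioc_lt_top.ne)
    hf.aestronglyMeasurable ?_
  filter_upwards [ae_restrict_mem measurableSet_Ioc] with u hu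
  simpa [Real.norm_eq_abs] using hb u hu

theorem stmt_8 (d : ℕ) (hd : 1 ≤ d) (R : ℝ) (hR : 0 < R)
    (K : ℝ → ℝ) (hKmeas : Measurable K) (hKnonneg : ∀ s, 0 ≤ K s)
    (hKbdd : ∃ M, ∀ s, K s ≤ M)
    (hKsupp : ∀ s, R < s → K s = 0)
    (mK : ℕ → ℝ) (hmK : ∀ j, mK j = ∫ s in (0:ℝ)..R, s ^ (j - 1) * K s)
    (hmKd : 0 < mK d)
    (B : ℕ → ℝ) (hB : ∀ p, B p = mK (d + p) / mK d)
    (F : ℝ → ℝ) (hFcont : ContinuousOn F (Set.Ici 0))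
    (τ₁ τ₂ τ₃ : ℝ)
    (hF : (fun t => F t - (τ₁ * t + τ₂ * t ^ 2 + τ₃ * t ^ 3))
      =o[𝓝[>] (0:ℝ)] fun t => t ^ 3)
    (IF : ℝ → ℝ)
    (hIF : ∀ h, IF h = (∫ u in (0:ℝ)..R, u ^ (d - 1) * K u * F (h * u)) / mK d) :
    (fun h => IF h - F (B 1 * h)
        - (τ₂ * (B 2 - (B 1) ^ 2) * h ^ 2 + τ₃ * (B 3 - (B 1) ^ 3) * h ^ 3))
      =o[𝓝[>] (0:ℝ)] fun h => h ^ 3 := by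
  obtain ⟨M, hM⟩ := hKbdd
  set M' := max M 0 with hM'
  have hKb : ∀ s, |K s| ≤ M' := fun s => by
    rw [abs_of_nonneg (hKnonneg s)]; exact (hM s).trans (le_max_left _ _)
  set E : ℝ → ℝ := fun t => F t - (τ₁ * t + τ₂ * t ^ 2 + τ₃ * t ^ 3) with hE
  -- monomial integrability
  have hInt_mom : ∀ j : ℕ, IntervalIntegrable (fun u => u ^ j * K u) volume 0 R := by
    intro j
    refine aux_II hR.le (((measurable_id.pow_const j).mul hKmeas).aemeasurable)
      (C := R ^ j * M') (fun u hu => ?_)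
    rw [abs_mul]
    have h1 : |u ^ j| ≤ R ^ j := by
      rw [abs_of_nonneg (pow_nonneg hu.1.le _)]
      exact pow_le_pow_left₀ hu.1.le hu.2 _
    exact mul_le_mul h1 (hKb u) (abs_nonneg _) (pow_nonneg hR.le _)
  -- moment values
  have hmono : ∀ j : ℕ, (∫ u in (0:ℝ)..R, u ^ (d - 1 + j) * K u) = mK (d + j) := by
    intro j
    rw [hmK (d + j)]
    have : d + j - 1 = d - 1 + j := by omega
    rw [this]
  have hmnn : ∀ j : ℕ, 0 ≤ mK (d + j) := by
    intro j
    rw [hmK]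
    apply intervalIntegral.integral_nonneg hR.le
    intro u hu
    exact mul_nonneg (pow_nonneg hu.1 _) (hKnonneg u)
  -- positivity of mK (d+1)
  have hmKd1 : 0 < mK (d + 1) := by
    rcases (hmnn 1).lt_or_eq with h | h
    · exact h
    have hint : IntegrableOn (fun u => u ^ d * K u) (Set.Ioc 0 R) volume := by
      have := hInt_mom d
      rwa [intervalIntegrable_iff_integrableOn_Ioc_of_le hR.le] at this
    have h0 : ∫ u in Set.Ioc (0:ℝ) R, u ^ d * K u = 0 := by
      have := hmK (d + 1)
      rw [intervalIntegral.integral_of_le hR.le] at this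
      simp only [Nat.add_sub_cancel] at this
      rw [← this, ← h]
    have hz : (fun u => u ^ d * K u) =ᵐ[volume.restrict (Set.Ioc (0:ℝ) R)] 0 := by
      refine (MeasureTheory.integral_eq_zero_iff_of_nonneg_ae ?_ hint).mp h0
      filter_upwards [ae_restrict_mem measurableSet_Ioc] with u hu
      exact mul_nonneg (pow_nonneg hu.1.le _) (hKnonneg u)
    have : mK d = 0 := by
      rw [hmK, intervalIntegral.integral_of_le hR.le]
      have : ∫ u in Set.Ioc (0:ℝ) R, u ^ (d - 1) * K u = ∫ _u in Set.Ioc (0:ℝ) R, (0:ℝ) := by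
        apply integral_congr_ae
        filter_upwards [hz, ae_restrict_mem measurableSet_Ioc] with u hu hu2
        have hKu : K u = 0 := by
          rcases mul_eq_zero.mp hu with h' | h'
          · exact absurd h' (pow_ne_zero _ hu2.1.ne')
          · exact h'
        simp [hKu]
      simpa using this
    linarith
  have hB1pos : 0 < B 1 := by rw [hB]; exact div_pos hmKd1 hmKd
  -- polynomial moment computation
  have hPint : ∀ (c : ℝ) (j : ℕ) (h : ℝ),
      IntervalIntegrable (fun u => u ^ (d-1) * K u * (c * (h*u)^j)) volume 0 R := by
    intro c j h
    have heq : (fun u => u ^ (d-1) * K u * (c * (h*u)^j))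
        = fun u => (c * h^j) * (u ^ (d-1+j) * K u) := by funext u; ring
    rw [heq]; exact (hInt_mom _).const_mul _
  have hPval : ∀ (c : ℝ) (j : ℕ) (h : ℝ),
      (∫ u in (0:ℝ)..R, u ^ (d-1) * K u * (c * (h*u)^j)) = c * h^j * mK (d+j) := by
    intro c j h
    have heq : (fun u => u ^ (d-1) * K u * (c * (h*u)^j))
        = fun u => (c * h^j) * (u ^ (d-1+j) * K u) := by funext u; ring
    rw [heq, intervalIntegral.integral_const_mul, hmono]
  -- integrability of F-part
  have hFint : ∀ h : ℝ, 0 ≤ h →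
      IntervalIntegrable (fun u => u ^ (d-1) * K u * F (h*u)) volume 0 R := by
    intro h h0
    have hcont : ContinuousOn (fun u => F (h*u)) (Set.Icc 0 R) := by
      apply hFcont.comp (continuous_const.mul continuous_id).continuousOn
      intro u hu
      exact mul_nonneg h0 hu.1
    obtain ⟨C, hC⟩ := (isCompact_Icc).exists_bound_of_continuousOn hcont
    refine aux_II hR.le ?_ (C := R ^ (d-1) * M' * C) (fun u hu => ?_)
    · exact ((measurable_id.pow_const (d-1)).mul hKmeas).aemeasurable.mul
        ((hcont.mono Set.Ioc_subset_Icc_self).aemeasurable measurableSet_Ioc)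
    · rw [abs_mul, abs_mul]
      have h1 : |u ^ (d-1)| ≤ R ^ (d-1) := by
        rw [abs_of_nonneg (pow_nonneg hu.1.le _)]
        exact pow_le_pow_left₀ hu.1.le hu.2 _
      have h2 : |F (h*u)| ≤ C := hC u (Set.Ioc_subset_Icc_self hu)
      have hC0 : 0 ≤ C := (abs_nonneg _).trans (hC 0 ⟨le_refl 0, hR.le⟩)
      exact mul_le_mul (mul_le_mul h1 (hKb u) (abs_nonneg _) (pow_nonneg hR.le _))
        h2 (abs_nonneg _) (mul_nonneg (pow_nonneg hR.le _) ((abs_nonneg _).trans (hKb 0)))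
  -- integrability of E-part and the splitting
  have hPsum : ∀ h : ℝ, (fun u => u ^ (d-1) * K u * (τ₁*(h*u) + τ₂*(h*u)^2 + τ₃*(h*u)^3))
      = fun u => u ^ (d-1) * K u * (τ₁*(h*u)^1)
        + (u ^ (d-1) * K u * (τ₂*(h*u)^2) + u ^ (d-1) * K u * (τ₃*(h*u)^3)) := by
    intro h; funext u; ring
  have hPintAll : ∀ h : ℝ, IntervalIntegrable
      (fun u => u ^ (d-1) * K u * (τ₁*(h*u) + τ₂*(h*u)^2 + τ₃*(h*u)^3)) volume 0 R := by
    intro h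
    rw [hPsum h]
    exact (hPint τ₁ 1 h).add ((hPint τ₂ 2 h).add (hPint τ₃ 3 h))
  have hEint : ∀ h : ℝ, 0 ≤ h →
      IntervalIntegrable (fun u => u ^ (d-1) * K u * E (h*u)) volume 0 R := by
    intro h h0
    have heq : (fun u => u ^ (d-1) * K u * E (h*u))
        = fun u => u ^ (d-1) * K u * F (h*u)
          - u ^ (d-1) * K u * (τ₁*(h*u) + τ₂*(h*u)^2 + τ₃*(h*u)^3) := by
      funext u; simp only [hE]; ring
    rw [heq]; exact (hFint h h0).sub (hPintAll h)
  have hsplit : ∀ h : ℝ, 0 ≤ h → (∫ u in (0:ℝ)..R, u ^ (d-1) * K u * F (h*u))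
      = (∫ u in (0:ℝ)..R, u ^ (d-1) * K u * E (h*u))
        + (τ₁*h*mK (d+1) + τ₂*h^2*mK (d+2) + τ₃*h^3*mK (d+3)) := by
    intro h h0
    have heq : (fun u => u ^ (d-1) * K u * F (h*u))
        = fun u => u ^ (d-1) * K u * E (h*u)
          + u ^ (d-1) * K u * (τ₁*(h*u) + τ₂*(h*u)^2 + τ₃*(h*u)^3) := by
      funext u; simp only [hE]; ring
    rw [heq, intervalIntegral.integral_add (hEint h h0) (hPintAll h), hPsum h,
      intervalIntegral.integral_add (hPint τ₁ 1 h) ((hPint τ₂ 2 h).add (hPint τ₃ 3 h)),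
      intervalIntegral.integral_add (hPint τ₂ 2 h) (hPint τ₃ 3 h),
      hPval τ₁ 1 h, hPval τ₂ 2 h, hPval τ₃ 3 h]
    ring
  -- key identity on Ioi 0
  have key : ∀ h : ℝ, 0 < h →
      IF h - F (B 1 * h) - (τ₂ * (B 2 - (B 1) ^ 2) * h ^ 2 + τ₃ * (B 3 - (B 1) ^ 3) * h ^ 3)
      = (∫ u in (0:ℝ)..R, u ^ (d-1) * K u * E (h*u)) / mK d - E (B 1 * h) := by
    intro h h0
    have hFB : F (B 1 * h) = E (B 1 * h)
        + (τ₁*(B 1*h) + τ₂*(B 1*h)^2 + τ₃*(B 1*h)^3) := by simp [hE]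
    rw [hIF, hsplit h h0.le, hFB, hB 1, hB 2, hB 3]
    field_simp
    ring
  -- E ∘ (B1 ·) is o(h^3)
  have hmap : Tendsto (fun h : ℝ => B 1 * h) (𝓝[>] 0) (𝓝[>] 0) := by
    apply tendsto_nhdsWithin_of_tendsto_nhds_of_eventually_within
    · have hc : Continuous fun h : ℝ => B 1 * h := continuous_const.mul continuous_id
      have := hc.tendsto (0:ℝ)
      simp only [mul_zero] at this
      exact this.mono_left nhdsWithin_le_nhds
    · filter_upwards [eventually_mem_nhdsWithin] with h hh
      exact mul_pos hB1pos hh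
  have hT2 : (fun h => E (B 1 * h)) =o[𝓝[>] (0:ℝ)] fun h => h ^ 3 := by
    have h1 := hF.comp_tendsto hmap
    simp only [Function.comp_def] at h1
    refine h1.trans_isBigO ?_
    have heq : (fun h : ℝ => (B 1 * h) ^ 3) = fun h : ℝ => (B 1)^3 * h^3 := by
      funext h; ring
    rw [heq]
    exact isBigO_const_mul_self _ _ _
  -- the integral term is o(h^3)
  have hT1 : (fun h => (∫ u in (0:ℝ)..R, u ^ (d-1) * K u * E (h*u)) / mK d)
      =o[𝓝[>] (0:ℝ)] fun h => h ^ 3 := by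
    rw [isLittleO_iff]
    intro c hc
    set ε := c * mK d / (mK (d+3) + 1) with hεdef
    have hεpos : 0 < ε := div_pos (mul_pos hc hmKd) (by linarith [hmnn 3])
    have hev := hF.def hεpos
    rw [eventually_nhdsWithin_iff, Metric.eventually_nhds_iff] at hev
    obtain ⟨δ, hδpos, hδ⟩ := hev
    have hmem : Set.Ioo (0:ℝ) (δ / R) ∈ 𝓝[>] (0:ℝ) :=
      Ioo_mem_nhdsGT_of_mem ⟨le_refl 0, div_pos hδpos hR⟩
    filter_upwards [hmem] with h hh
    obtain ⟨hh0, hhδ⟩ := hh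
    -- bound the integral
    have hbound : ∀ᵐ u ∂volume.restrict (Set.uIoc 0 R),
        ‖u ^ (d-1) * K u * E (h*u)‖ ≤ ε * h^3 * (u ^ (d+2) * K u) := by
      rw [Set.uIoc_of_le hR.le]
      filter_upwards [ae_restrict_mem measurableSet_Ioc] with u hu
      have hhu : 0 < h * u := mul_pos hh0 hu.1
      have hdist : dist (h*u) 0 < δ := by
        rw [Real.dist_eq, sub_zero, abs_of_pos hhu]
        calc h * u ≤ h * R := by nlinarith [hu.2]
          _ < (δ / R) * R := by nlinarith
          _ = δ := by field_simp
      have hEb := hδ hdist hhu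
      rw [Real.norm_eq_abs, Real.norm_eq_abs, abs_of_pos (pow_pos hhu 3)] at hEb
      have : ‖u ^ (d-1) * K u * E (h*u)‖ = u ^ (d-1) * K u * |E (h*u)| := by
        rw [Real.norm_eq_abs, abs_mul, abs_mul,
          abs_of_nonneg (pow_nonneg hu.1.le _), abs_of_nonneg (hKnonneg u)]
      rw [this]
      have hKd1u : 0 ≤ u ^ (d-1) * K u := mul_nonneg (pow_nonneg hu.1.le _) (hKnonneg u)
      calc u ^ (d-1) * K u * |E (h*u)| ≤ u ^ (d-1) * K u * (ε * (h*u)^3) := by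
            exact mul_le_mul_of_nonneg_left hEb hKd1u
        _ = ε * h^3 * (u ^ (d-1) * u^3 * K u) := by ring
        _ = ε * h^3 * (u ^ (d+2) * K u) := by
            rw [← pow_add]
            congr 3
            omega
    have hIb : IntervalIntegrable (fun u => ε * h^3 * (u ^ (d+2) * K u)) volume 0 R :=
      (hInt_mom (d+2)).const_mul _
    have hnorm := intervalIntegral.norm_integral_le_abs_of_norm_le hbound hIb
    have hval : (∫ u in (0:ℝ)..R, ε * h^3 * (u ^ (d+2) * K u))
        = ε * h^3 * mK (d+3) := by
      rw [intervalIntegral.integral_const_mul]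
      congr 1
      rw [hmK (d+3)]
      have : d + 3 - 1 = d + 2 := by omega
      rw [this]
    rw [hval] at hnorm
    have hm3 : 0 ≤ mK (d+3) := hmnn 3
    have habs : |ε * h^3 * mK (d+3)| = ε * h^3 * mK (d+3) := by
      rw [abs_of_nonneg]
      positivity
    rw [habs] at hnorm
    rw [Real.norm_eq_abs, abs_div, abs_of_pos hmKd, div_le_iff₀ hmKd]
    calc |∫ u in (0:ℝ)..R, u ^ (d-1) * K u * E (h*u)| ≤ ε * h^3 * mK (d+3) := hnorm
      _ ≤ c * ‖h^3‖ * mK d := by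
          rw [Real.norm_eq_abs, abs_of_pos (pow_pos hh0 3), hεdef]
          rw [div_mul_eq_mul_div, div_mul_eq_mul_div, div_le_iff₀ (by linarith)]
          nlinarith [pow_pos hh0 3, mul_pos hc hmKd]
  -- conclude
  have := (hT1.sub hT2).congr' (by
    filter_upwards [eventually_mem_nhdsWithin] with h hh
    exact (key h hh).symm) (EventuallyEq.refl _ _)
  exact this
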